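/- Let Z be a finite set with |Z| = D ≥ 1, let γ > 1, let A be the γ-diagonal matrix on Z, and fix z ∈ Z^m. Let Ŵ = (Ŵ_1,…,Ŵ_m) have independent components with P(Ŵ_i = w) = A[w, z_i]. Then the expected PRAM estimation error satisfies E‖A⁻¹·T_{Ŵ} − T_z‖₂ ≤ c·√(D/m), where c = 1 + D/(γ − 1) is the ℓ2 condition number of A. -/

import Mathlib

open Finset Matrix

/-- The γ-diagonal PRAM matrix on a finite alphabet `Z`. -/
noncomputable def gammaDiag {Z : Type*} [Fintype Z] [DecidableEq Z] (γ : ℝ) (w z : Z) : ℝ :=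
  if w = z then γ / (γ + (Fintype.card Z : ℝ) - 1) else 1 / (γ + (Fintype.card Z : ℝ) - 1)

/-- The type (empirical distribution) of a sequence `z ∈ Z^m`. -/
noncomputable def typeOf {Z : Type*} [DecidableEq Z] {m : ℕ} (z : Fin m → Z) : Z → ℝ :=
  fun a => ((Finset.univ.filter fun i => z i = a).card : ℝ) / m

section Helpers
set_option linter.unusedSectionVars false
variable {Z : Type*} [Fintype Z] [DecidableEq Z]

lemma exp_one {m : ℕ} (p : Fin m → Z → ℝ) (hp : ∀ k, ∑ x, p k x = 1)
    (i : Fin m) (F : Z → ℝ) :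
    ∑ f : Fin m → Z, (∏ k, p k (f k)) * F (f i) = ∑ x, p i x * F x := by
  have h1 : ∀ f : Fin m → Z, (∏ k, p k (f k)) * F (f i)
      = ∏ k, (p k (f k) * (if i = k then F (f k) else 1)) := by
    intro f
    rw [Finset.prod_mul_distrib, Finset.prod_ite_eq]
    simp
  simp_rw [h1]
  rw [← Fintype.prod_sum (fun k x => p k x * if i = k then F x else 1)]
  have h2 : ∀ k, (∑ x, p k x * (if i = k then F x else 1))
      = if i = k then ∑ x, p i x * F x else 1 := by
    intro k
    by_cases h : i = k
    · subst h; simp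
    · simp [h, hp k]
  simp_rw [h2]
  rw [Finset.prod_ite_eq]
  simp

lemma exp_two {m : ℕ} (p : Fin m → Z → ℝ) (hp : ∀ k, ∑ x, p k x = 1)
    (i j : Fin m) (hij : i ≠ j) (g h : Z → ℝ) :
    ∑ f : Fin m → Z, (∏ k, p k (f k)) * (g (f i) * h (f j))
      = (∑ x, p i x * g x) * (∑ x, p j x * h x) := by
  have h1 : ∀ f : Fin m → Z, (∏ k, p k (f k)) * (g (f i) * h (f j))
      = ∏ k, (p k (f k) * ((if i = k then g (f k) else 1) * (if j = k then h (f k) else 1))) := by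
    intro f
    simp_rw [Finset.prod_mul_distrib, Finset.prod_ite_eq]
    simp
  simp_rw [h1]
  rw [← Fintype.prod_sum (fun k x => p k x * ((if i = k then g x else 1) * if j = k then h x else 1))]
  have h2 : ∀ k, (∑ x, p k x * ((if i = k then g x else 1) * (if j = k then h x else 1)))
      = (if i = k then ∑ x, p i x * g x else 1) * (if j = k then ∑ x, p j x * h x else 1) := by
    intro k
    by_cases h : i = k
    · subst h
      simp [if_neg (fun hh : j = i => hij hh.symm)]
    · by_cases h' : j = k
      · subst h'; simp [h]
      · simp [h, h', hp k]
  simp_rw [h2]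
  rw [Finset.prod_mul_distrib, Finset.prod_ite_eq, Finset.prod_ite_eq]
  simp

lemma typeOf_eq {m : ℕ} (z : Fin m → Z) (a : Z) :
    typeOf z a = (∑ i, if z i = a then (1:ℝ) else 0) / m := by
  rw [typeOf, Finset.sum_boole]

lemma sum_typeOf {m : ℕ} (hm : 1 ≤ m) (z : Fin m → Z) :
    ∑ a, typeOf z a = 1 := by
  simp_rw [typeOf_eq, ← Finset.sum_div, Finset.sum_comm (γ := Z)]
  have : ∀ i : Fin m, (∑ a, if z i = a then (1:ℝ) else 0) = 1 := by
    intro i; rw [Finset.sum_ite_eq]; simp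
  simp_rw [this]
  have hm0 : (m:ℝ) ≠ 0 := by positivity
  simp [hm0]

lemma gd_nonneg (γ : ℝ) (hγ : 1 < γ) (hD : 1 ≤ Fintype.card Z) (w y : Z) :
    0 ≤ gammaDiag γ w y := by
  have h1 : (1:ℝ) ≤ (Fintype.card Z : ℝ) := by exact_mod_cast hD
  have : 0 < γ + (Fintype.card Z : ℝ) - 1 := by linarith
  unfold gammaDiag; split <;> positivity

lemma gd_col_sum (γ : ℝ) (hγ : 1 < γ) (hD : 1 ≤ Fintype.card Z) (y : Z) :
    ∑ w, gammaDiag γ w y = 1 := by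
  have h1 : (1:ℝ) ≤ (Fintype.card Z : ℝ) := by exact_mod_cast hD
  have hq : γ + (Fintype.card Z : ℝ) - 1 ≠ 0 := by intro h; nlinarith
  have : ∀ w : Z, gammaDiag γ w y
      = 1 / (γ + (Fintype.card Z : ℝ) - 1)
        + (if w = y then (γ - 1) / (γ + (Fintype.card Z : ℝ) - 1) else 0) := by
    intro w; unfold gammaDiag; by_cases h : w = y
    · rw [if_pos h, if_pos h, ← add_div]; norm_num
    · rw [if_neg h, if_neg h]; simp
  simp_rw [this, Finset.sum_add_distrib, Finset.sum_ite_eq', if_pos (Finset.mem_univ y),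
    Finset.sum_const, Finset.card_univ, nsmul_eq_mul]
  field_simp
  ring

lemma inv_gammaDiag (γ : ℝ) (hγ : 1 < γ) (hD : 1 ≤ Fintype.card Z) :
    (Matrix.of (gammaDiag (Z := Z) γ))⁻¹
      = Matrix.of (fun w x =>
          ((if w = x then (γ + (Fintype.card Z : ℝ) - 1) else 0) - 1) / (γ - 1)) := by
  have h1 : (1:ℝ) ≤ (Fintype.card Z : ℝ) := by exact_mod_cast hD
  have hγ1 : γ - 1 ≠ 0 := by intro h; linarith [h]
  have hq0 : (0:ℝ) < γ + (Fintype.card Z : ℝ) - 1 := by linarith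
  have hq : γ + (Fintype.card Z : ℝ) - 1 ≠ 0 := ne_of_gt hq0
  apply Matrix.inv_eq_right_inv
  ext w x
  rw [Matrix.mul_apply, Matrix.one_apply]
  have hterm : ∀ a, (Matrix.of (gammaDiag (Z := Z) γ)) w a *
      (Matrix.of (fun w x =>
        ((if w = x then (γ + (Fintype.card Z : ℝ) - 1) else 0) - 1) / (γ - 1))) a x
      = ((if w = a then γ else 1) * (if a = x then (γ + (Fintype.card Z : ℝ) - 1) else 0)
          - (if w = a then γ else 1)) / ((γ + (Fintype.card Z : ℝ) - 1) * (γ - 1)) := by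
    intro a
    simp only [Matrix.of_apply]
    unfold gammaDiag
    split_ifs <;> field_simp <;> ring
  simp_rw [hterm, ← Finset.sum_div, Finset.sum_sub_distrib]
  have hs1 : (∑ a, (if w = a then γ else 1) * (if a = x then (γ + (Fintype.card Z : ℝ) - 1) else 0))
      = (if w = x then γ else 1) * (γ + (Fintype.card Z : ℝ) - 1) := by
    simp_rw [mul_ite, mul_zero]
    rw [Finset.sum_ite_eq']
    simp
  have hs2 : (∑ a, (if w = a then γ else 1)) = γ + (Fintype.card Z : ℝ) - 1 := by
    have : ∀ a : Z, (if w = a then γ else 1) = 1 + (if w = a then γ - 1 else 0) := by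
      intro a; split <;> ring
    simp_rw [this, Finset.sum_add_distrib, Finset.sum_ite_eq, if_pos (Finset.mem_univ w),
      Finset.sum_const, Finset.card_univ, nsmul_eq_mul]
    ring
  rw [hs1, hs2]
  by_cases h : w = x
  · rw [if_pos h, if_pos h]; field_simp
  · rw [if_neg h, if_neg h]; simp

end Helpers

/-- Expected PRAM estimation error: if each `Ŵ_i` is independently drawn with
`P(Ŵ_i = w) = A[w, z_i]` for the γ-diagonal matrix `A`, then the estimate
`A⁻¹·T_Ŵ` of the true type satisfies `E‖A⁻¹·T_Ŵ - T_z‖₂ ≤ c·√(D/m)` with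
`c = 1 + D/(γ-1)` the ℓ2 condition number of `A`. -/
theorem expected_pram_estimation_error
    {Z : Type*} [Fintype Z] [DecidableEq Z] (hD : 1 ≤ Fintype.card Z)
    (γ : ℝ) (hγ : 1 < γ) (m : ℕ) (hm : 1 ≤ m) (z : Fin m → Z) :
    letI D : ℝ := (Fintype.card Z : ℝ)
    letI A : Matrix Z Z ℝ := Matrix.of (gammaDiag γ)
    letI c : ℝ := 1 + D / (γ - 1)
    (∑ what : Fin m → Z, (∏ i, gammaDiag γ (what i) (z i)) *
        Real.sqrt (∑ w : Z, (A⁻¹.mulVec (typeOf what) w - typeOf z w) ^ 2))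
      ≤ c * Real.sqrt (D / m) := by
  classical
  show (∑ what : Fin m → Z, (∏ i, gammaDiag γ (what i) (z i)) *
        Real.sqrt (∑ w : Z, ((Matrix.of (gammaDiag (Z := Z) γ))⁻¹.mulVec (typeOf what) w
          - typeOf z w) ^ 2))
      ≤ (1 + (Fintype.card Z : ℝ) / (γ - 1)) * Real.sqrt ((Fintype.card Z : ℝ) / m)
  have h1 : (1:ℝ) ≤ (Fintype.card Z : ℝ) := by exact_mod_cast hD
  have hγ1 : (0:ℝ) < γ - 1 := by linarith
  have hq0 : (0:ℝ) < γ + (Fintype.card Z : ℝ) - 1 := by linarith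
  have hm0 : (0:ℝ) < (m:ℝ) := by exact_mod_cast hm
  set D : ℝ := (Fintype.card Z : ℝ) with hDdef
  set c : ℝ := 1 + D / (γ - 1) with hcdef
  have hc0 : 0 < c := by positivity
  -- probabilities
  set p : Fin m → Z → ℝ := fun i x => gammaDiag γ x (z i) with hpdef
  have hp1 : ∀ i, ∑ x, p i x = 1 := fun i => gd_col_sum γ hγ hD (z i)
  have hp0 : ∀ i x, 0 ≤ p i x := fun i x => gd_nonneg γ hγ hD x (z i)
  set μ : Z → ℝ := fun w => (∑ i, p i w) / m with hμdef
  have hP0 : ∀ v : Fin m → Z, 0 ≤ ∏ i, p i (v i) :=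
    fun v => Finset.prod_nonneg fun i _ => hp0 i (v i)
  have hPsum : ∑ v : Fin m → Z, ∏ i, p i (v i) = 1 := by
    rw [← Fintype.prod_sum p]
    simp [hp1]
  -- explicit inverse action
  have hmulVec : ∀ (v : Z → ℝ) (w : Z),
      (Matrix.of (gammaDiag (Z := Z) γ))⁻¹.mulVec v w
        = ((γ + D - 1) * v w - ∑ a, v a) / (γ - 1) := by
    intro v w
    rw [inv_gammaDiag γ hγ hD, Matrix.mulVec, dotProduct]
    have : ∀ a, (Matrix.of (fun w x =>
          ((if w = x then (γ + D - 1) else 0) - 1) / (γ - 1))) w a * v a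
        = ((if w = a then (γ + D - 1) else 0) * v a - v a) / (γ - 1) := by
      intro a; simp only [Matrix.of_apply]; ring
    rw [Finset.sum_congr rfl fun a _ => this a]
    simp_rw [← Finset.sum_div, Finset.sum_sub_distrib, ite_mul, zero_mul,
      Finset.sum_ite_eq, if_pos (Finset.mem_univ w)]
  -- the key pointwise identity
  have key : ∀ (v : Fin m → Z) (w : Z),
      (Matrix.of (gammaDiag (Z := Z) γ))⁻¹.mulVec (typeOf v) w - typeOf z w
        = c * (typeOf v w - μ w) := by
    intro v w
    rw [hmulVec, sum_typeOf hm v]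
    have hsum : ∑ i, p i w
        = (m:ℝ) * (1 / (γ + D - 1))
          + ((Finset.univ.filter fun i => z i = w).card : ℝ) * ((γ - 1) / (γ + D - 1)) := by
      have : ∀ i : Fin m, p i w
          = 1 / (γ + D - 1) + (if z i = w then (γ - 1) / (γ + D - 1) else 0) := by
        intro i
        simp only [hpdef, gammaDiag]
        by_cases h : w = z i
        · rw [if_pos h, if_pos h.symm, ← add_div]; norm_num [hDdef]
        · rw [if_neg h, if_neg (fun hh => h hh.symm)]; simp [hDdef]
      simp_rw [this, Finset.sum_add_distrib, Finset.sum_const, Finset.card_univ,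
        Fintype.card_fin, nsmul_eq_mul, ← Finset.sum_filter, Finset.sum_const, nsmul_eq_mul]
    have htz : typeOf z w = ((Finset.univ.filter fun i => z i = w).card : ℝ) / m := rfl
    rw [hμdef]
    simp only
    rw [hsum, htz, hcdef]
    have hq : γ + D - 1 ≠ 0 := ne_of_gt hq0
    have hg : γ - 1 ≠ 0 := ne_of_gt hγ1
    have hmne : (m:ℝ) ≠ 0 := ne_of_gt hm0
    field_simp
    ring
  -- rewrite the error norm
  set S : (Fin m → Z) → ℝ := fun v => ∑ w, (typeOf v w - μ w)^2 with hSdef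
  have hS0 : ∀ v, 0 ≤ S v := fun v => Finset.sum_nonneg fun w _ => sq_nonneg _
  have step1 : ∀ v : Fin m → Z,
      Real.sqrt (∑ w : Z, ((Matrix.of (gammaDiag (Z := Z) γ))⁻¹.mulVec (typeOf v) w
        - typeOf z w) ^ 2) = c * Real.sqrt (S v) := by
    intro v
    simp_rw [key v, mul_pow]
    rw [← Finset.mul_sum, Real.sqrt_mul (sq_nonneg c), Real.sqrt_sq hc0.le]
  -- second moment bound
  set Y : Z → Fin m → Z → ℝ := fun w i x => (if x = w then 1 else 0) - p i w with hYdef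
  have hpair : ∀ (w : Z) (i j : Fin m),
      (∑ v : Fin m → Z, (∏ k, p k (v k)) * (Y w i (v i) * Y w j (v j)))
        = if i = j then p i w - (p i w)^2 else 0 := by
    intro w i j
    by_cases hij : i = j
    · subst hij
      rw [if_pos rfl, exp_one p hp1 i (fun x => Y w i x * Y w i x)]
      have : ∀ x, p i x * (Y w i x * Y w i x)
          = p i x * (p i w)^2 + (if x = w then p i x * (1 - 2 * p i w) else 0) := by
        intro x; simp only [hYdef]
        by_cases hx : x = w
        · rw [if_pos hx, if_pos hx]; ring
        · rw [if_neg hx, if_neg hx]; ring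
      simp_rw [this, Finset.sum_add_distrib, ← Finset.sum_mul, hp1 i,
        Finset.sum_ite_eq', if_pos (Finset.mem_univ w)]
      ring
    · rw [if_neg hij, exp_two p hp1 i j hij (fun x => Y w i x) (fun x => Y w j x)]
      have hz : ∀ k : Fin m, ∑ x, p k x * Y w k x = 0 := by
        intro k
        have : ∀ x, p k x * Y w k x = (if x = w then p k x else 0) - p k x * p k w := by
          intro x; simp only [hYdef]
          by_cases hx : x = w
          · rw [if_pos hx, if_pos hx]; ring
          · rw [if_neg hx, if_neg hx]; ring
        simp_rw [this, Finset.sum_sub_distrib, Finset.sum_ite_eq', if_pos (Finset.mem_univ w),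
          ← Finset.sum_mul, hp1 k]
        ring
      rw [hz i, hz j, mul_zero]
  have hw : ∀ w : Z, (∑ v : Fin m → Z, (∏ k, p k (v k)) * (typeOf v w - μ w)^2)
      = (∑ i, (p i w - (p i w)^2)) / (m:ℝ)^2 := by
    intro w
    have he : ∀ v : Fin m → Z, (typeOf v w - μ w)^2
        = (∑ i, ∑ j, Y w i (v i) * Y w j (v j)) / (m:ℝ)^2 := by
      intro v
      have h0 : typeOf v w - μ w = (∑ i, Y w i (v i)) / m := by
        rw [typeOf_eq, hμdef]
        simp only [hYdef]
        rw [← sub_div, ← Finset.sum_sub_distrib]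
      rw [h0, div_pow, sq, Finset.sum_mul_sum]
    simp_rw [he, ← mul_div_assoc]
    rw [← Finset.sum_div]
    congr 1
    simp_rw [Finset.mul_sum]
    rw [Finset.sum_comm]
    refine Finset.sum_congr rfl fun i _ => ?_
    rw [Finset.sum_comm]
    simp_rw [hpair w i, Finset.sum_ite_eq, if_pos (Finset.mem_univ i)]
  have hES : ∑ v : Fin m → Z, (∏ i, p i (v i)) * S v ≤ D / m := by
    have hrw : ∑ v : Fin m → Z, (∏ i, p i (v i)) * S v
        = ∑ w : Z, (∑ i, (p i w - (p i w)^2)) / (m:ℝ)^2 := by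
      simp_rw [hSdef, Finset.mul_sum]
      rw [Finset.sum_comm]
      exact Finset.sum_congr rfl fun w _ => hw w
    rw [hrw, ← Finset.sum_div]
    have hnum : ∑ w : Z, ∑ i, (p i w - (p i w)^2) ≤ (m:ℝ) := by
      calc ∑ w : Z, ∑ i, (p i w - (p i w)^2)
          ≤ ∑ w : Z, ∑ i : Fin m, p i w := by
            refine Finset.sum_le_sum fun w _ => Finset.sum_le_sum fun i _ => ?_
            nlinarith [sq_nonneg (p i w)]
        _ = (m:ℝ) := by
            rw [Finset.sum_comm]
            have : ∀ i : Fin m, ∑ w : Z, p i w = 1 :=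
              fun i => gd_col_sum γ hγ hD (z i)
            simp [this]
    calc (∑ w : Z, ∑ i, (p i w - (p i w)^2)) / (m:ℝ)^2
        ≤ (m:ℝ) / (m:ℝ)^2 := (div_le_div_iff_of_pos_right (by positivity)).mpr hnum
      _ = 1 / (m:ℝ) := by rw [sq, div_mul_eq_div_div, div_self (ne_of_gt hm0)]
      _ ≤ D / (m:ℝ) := (div_le_div_iff_of_pos_right hm0).mpr h1
  have hfin : ∑ v : Fin m → Z, (∏ i, p i (v i)) * Real.sqrt (S v) ≤ Real.sqrt (D / m) := by
    have hCS := Finset.sum_mul_sq_le_sq_mul_sq Finset.univ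
      (fun v : Fin m → Z => Real.sqrt (∏ i, p i (v i)))
      (fun v : Fin m → Z => Real.sqrt (∏ i, p i (v i)) * Real.sqrt (S v))
    have e1 : ∀ v : Fin m → Z, Real.sqrt (∏ i, p i (v i)) *
        (Real.sqrt (∏ i, p i (v i)) * Real.sqrt (S v)) = (∏ i, p i (v i)) * Real.sqrt (S v) := by
      intro v; rw [← mul_assoc, Real.mul_self_sqrt (hP0 v)]
    have e2 : ∀ v : Fin m → Z, (Real.sqrt (∏ i, p i (v i)))^2 = ∏ i, p i (v i) :=
      fun v => Real.sq_sqrt (hP0 v)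
    have e3 : ∀ v : Fin m → Z, (Real.sqrt (∏ i, p i (v i)) * Real.sqrt (S v))^2
        = (∏ i, p i (v i)) * S v := by
      intro v; rw [mul_pow, Real.sq_sqrt (hP0 v), Real.sq_sqrt (hS0 v)]
    simp_rw [e1, e2, e3, hPsum, one_mul] at hCS
    have hsq : (∑ v : Fin m → Z, (∏ i, p i (v i)) * Real.sqrt (S v))^2 ≤ D / m :=
      hCS.trans hES
    exact Real.le_sqrt_of_sq_le hsq
  calc (∑ what : Fin m → Z, (∏ i, gammaDiag γ (what i) (z i)) *
        Real.sqrt (∑ w : Z, ((Matrix.of (gammaDiag (Z := Z) γ))⁻¹.mulVec (typeOf what) w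
          - typeOf z w) ^ 2))
      = ∑ v : Fin m → Z, (∏ i, p i (v i)) * (c * Real.sqrt (S v)) := by
        refine Finset.sum_congr rfl fun v _ => ?_
        rw [step1 v]
    _ = c * ∑ v : Fin m → Z, (∏ i, p i (v i)) * Real.sqrt (S v) := by
        rw [Finset.mul_sum]; exact Finset.sum_congr rfl fun v _ => by ring
    _ ≤ c * Real.sqrt (D / m) := mul_le_mul_of_nonneg_left hfin hc0.le
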